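/- The expected nondisclosure payoff at threshold v^B strictly exceeds v^B for q > 0: q·P^q(v^B, v̂=v^B) + (1-q)∫P^q(s, v̂=v^B)g(s)ds > v^B for all q ∈ (0,1), where P^q(v^B, v̂=v^B) = v^B; consequently the early disclosure threshold satisfies v^E > v^B. -/

import Mathlib

open intervalIntegral

set_option maxHeartbeats 1000000

lemma key_alg (p q v I1 G1 Ic Gc μ KK DD E1 E2 : ℝ)
    (hp0 : 0 < p) (hp1 : p < 1) (hq0 : 0 < q) (hq1 : q < 1)
    (hG1 : 0 < G1) (hGsum : G1 + Gc = 1) (hGc : 0 ≤ Gc) (hIsum : I1 + Ic = μ)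
    (hKK : KK = (1-p)*μ + p*I1) (hDD : DD = 1 - p + p*G1)
    (hE1 : E1 = q + (1-q)*DD) (hE2 : E2 = q*(1-p) + (1-q)*DD)
    (hB : 0 < Ic - v*Gc) (hR : 0 ≤ KK - v*DD) :
    v < q * ((q*v + (1-q)*KK) / E1)
      + (1-q) * ((q*I1 + (1-q)*KK*G1) / E1
        + (q*(1-p)*Ic + (1-q)*KK*Gc) / E2) := by
  have hμ : μ = I1 + Ic := hIsum.symm
  subst hμ hKK hDD hE1 hE2
  have hGc' : Gc = 1 - G1 := by linarith
  subst hGc'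
  set KK := (1-p)*(I1+Ic) + p*I1 with hKK
  set DD := 1 - p + p*G1 with hDD
  have hDD0 : 0 < DD := by nlinarith
  have hE1 : 0 < q + (1-q)*DD := by nlinarith
  have hE2 : 0 < q*(1-p) + (1-q)*DD := by nlinarith
  set E1 := q + (1-q)*DD
  set E2 := q*(1-p) + (1-q)*DD
  set R := KK - v*DD with hRdef
  set B := Ic - v*(1-G1) with hBdef
  have key : (q * ((q*v + (1-q)*KK) / E1)
      + (1-q) * ((q*I1 + (1-q)*KK*G1) / E1
        + (q*(1-p)*Ic + (1-q)*KK*(1-G1)) / E2)) - v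
      = (1-q) * (R*(E2*(2*q+(1-q)*G1)+E1*(1-q)*(1-G1)) + q*(1-p)*B*(q*p)) / (E1*E2) := by
    rw [hRdef, hBdef, hKK]
    field_simp
    ring
  have hN : 0 < (1-q) * (R*(E2*(2*q+(1-q)*G1)+E1*(1-q)*(1-G1)) + q*(1-p)*B*(q*p)) / (E1*E2) := by
    apply div_pos _ (mul_pos hE1 hE2)
    apply mul_pos (by linarith)
    have h1 : 0 ≤ R*(E2*(2*q+(1-q)*G1)+E1*(1-q)*(1-G1)) := by
      apply mul_nonneg hR
      have : 0 ≤ E2*(2*q+(1-q)*G1) := mul_nonneg hE2.le (by nlinarith)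
      nlinarith [mul_nonneg (mul_nonneg hE1.le (by linarith : (0:ℝ) ≤ 1-q)) (by linarith : (0:ℝ) ≤ 1-G1)]
    have h2 : 0 < q*(1-p)*B*(q*p) :=
      mul_pos (mul_pos (mul_pos hq0 (by linarith)) hB) (mul_pos hq0 hp0)
    linarith
  linarith [key ▸ hN]

/-- the expected nondisclosure payoff at the benchmark threshold v^B
strictly exceeds v^B for every q ∈ (0,1); consequently any early-disclosure
indifference threshold v^E satisfies v^E > v^B. -/
theorem nondisclosure_payoff_exceeds_benchmark
    (vmin vmax : ℝ) (hv : vmin < vmax)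
    (p q : ℝ) (hp : p ∈ Set.Ioo (0:ℝ) 1) (hq : q ∈ Set.Ioo (0:ℝ) 1)
    (g : ℝ → ℝ)
    (hg_cont : ContinuousOn g (Set.Icc vmin vmax))
    (hg_pos : ∀ x ∈ Set.Icc vmin vmax, 0 < g x)
    (hg_density : ∫ t in vmin..vmax, g t = 1)
    (hg_logconcave : ∀ x ∈ Set.Icc vmin vmax, ∀ y ∈ Set.Icc vmin vmax,
      ∀ a b : ℝ, 0 ≤ a → 0 ≤ b → a + b = 1 →
        g x ^ a * g y ^ b ≤ g (a * x + b * y))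
    (G : ℝ → ℝ) (hG : ∀ v, G v = ∫ t in vmin..v, g t)
    (μ : ℝ) (hμ : μ = ∫ t in vmin..vmax, t * g t)
    (K D : ℝ → ℝ)
    (hK : ∀ v, K v = (1 - p) * μ + p * ∫ t in vmin..v, t * g t)
    (hD : ∀ v, D v = 1 - p + p * G v)
    (P : ℝ → ℝ → ℝ)   -- P s v̂ : nondisclosure price given signal s, threshold v̂
    (hP : ∀ s v, P s v =
      (q * s * (1 - p * (if v < s then 1 else 0)) + (1 - q) * K v) /
      (q * (1 - p * (if v < s then 1 else 0)) + (1 - q) * D v))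
    (vB : ℝ) (hvB_mem : vB ∈ Set.Ioo vmin vmax)
    (hvB : vB = K vB / D vB)
    (hPvB : P vB vB = vB) :
    q * P vB vB + (1 - q) * (∫ s in vmin..vmax, P s vB * g s) > vB ∧
    ∀ vE : ℝ, vE ∈ Set.Ioc vmin vmax →
      vE = q * P vE vE + (1 - q) * (∫ s in vmin..vmax, P s vE * g s) →
      vB < vE := by
  obtain ⟨hp0, hp1⟩ := hp
  obtain ⟨hq0, hq1⟩ := hq
  obtain ⟨hvB1, hvB2⟩ := hvB_mem
  -- generic integrability
  have hfg_cont : ContinuousOn (fun t => t * g t) (Set.Icc vmin vmax) :=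
    continuousOn_id.mul hg_cont
  have hsub : ∀ a b : ℝ, vmin ≤ a → a ≤ b → b ≤ vmax →
      Set.uIcc a b ⊆ Set.Icc vmin vmax := by
    intro a b ha hab hb
    rw [Set.uIcc_of_le hab]
    exact Set.Icc_subset_Icc ha hb
  have intg : ∀ a b : ℝ, vmin ≤ a → a ≤ b → b ≤ vmax →
      IntervalIntegrable g MeasureTheory.volume a b := fun a b ha hab hb =>
    (hg_cont.mono (hsub a b ha hab hb)).intervalIntegrable
  have intf : ∀ a b : ℝ, vmin ≤ a → a ≤ b → b ≤ vmax →
      IntervalIntegrable (fun t => t * g t) MeasureTheory.volume a b := fun a b ha hab hb =>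
    (hfg_cont.mono (hsub a b ha hab hb)).intervalIntegrable
  -- D vB > 0 and K vB = vB * D vB
  have hGvB_pos : 0 < G vB := by
    rw [hG]
    exact intervalIntegral_pos_of_pos_on (intg vmin vB le_rfl hvB1.le hvB2.le)
      (fun x hx => hg_pos x ⟨hx.1.le, hx.2.le.trans hvB2.le⟩) hvB1
  have hDvB_pos : 0 < D vB := by rw [hD]; nlinarith
  have hKvB : K vB = vB * D vB := by
    have h := hvB
    rw [eq_div_iff hDvB_pos.ne'] at h
    linarith
  -- MAIN CLAIM
  have claim : ∀ v : ℝ, vmin < v → v ≤ vmax → v ≤ vB →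
      v < q * P v v + (1 - q) * (∫ s in vmin..vmax, P s v * g s) := by
    intro v hv1 hv2 hvle
    have hvlt : v < vmax := lt_of_le_of_lt hvle hvB2
    -- basic integrals
    set G1 := ∫ t in vmin..v, g t with hG1def
    set I1 := ∫ t in vmin..v, t * g t with hI1def
    set Gc := ∫ t in v..vmax, g t with hGcdef
    set Ic := ∫ t in v..vmax, t * g t with hIcdef
    have hGsum : G1 + Gc = 1 := by
      rw [hG1def, hGcdef,
        integral_add_adjacent_intervals (intg vmin v le_rfl hv1.le hv2)
          (intg v vmax hv1.le hv2 le_rfl)]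
      exact hg_density
    have hIsum : I1 + Ic = μ := by
      rw [hI1def, hIcdef,
        integral_add_adjacent_intervals (intf vmin v le_rfl hv1.le hv2)
          (intf v vmax hv1.le hv2 le_rfl)]
      exact hμ.symm
    have hG1pos : 0 < G1 :=
      intervalIntegral_pos_of_pos_on (intg vmin v le_rfl hv1.le hv2)
        (fun x hx => hg_pos x ⟨hx.1.le, hx.2.le.trans hv2⟩) hv1
    have hGc0 : 0 ≤ Gc :=
      integral_nonneg hvlt.le (fun x hx => (hg_pos x ⟨hv1.le.trans hx.1, hx.2⟩).le)
    -- B > 0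
    have hBval : ∫ s in v..vmax, (s - v) * g s = Ic - v * Gc := by
      have e : ∀ s : ℝ, (s - v) * g s = s * g s - v * g s := fun s => by ring
      simp only [e]
      rw [integral_sub (intf v vmax hv1.le hv2 le_rfl)
        ((intg v vmax hv1.le hv2 le_rfl).const_mul v), integral_const_mul]
    have hB : 0 < Ic - v * Gc := by
      rw [← hBval]
      exact intervalIntegral_pos_of_pos_on
        (((continuousOn_id.sub continuousOn_const).mul
          (hg_cont.mono (hsub v vmax hv1.le hvlt.le le_rfl))).intervalIntegrable)
        (fun x hx => mul_pos (sub_pos.2 hx.1) (hg_pos x ⟨hv1.le.trans hx.1.le, hx.2.le⟩))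
        hvlt
    -- R ≥ 0
    have hMid : 0 ≤ ∫ s in v..vB, (vB - s) * g s :=
      integral_nonneg hvle (fun x hx =>
        mul_nonneg (by linarith [hx.2]) (hg_pos x ⟨hv1.le.trans hx.1, hx.2.trans hvB2.le⟩).le)
    have hMidval : ∫ s in v..vB, (vB - s) * g s
        = vB * (∫ t in v..vB, g t) - ∫ t in v..vB, t * g t := by
      have e : ∀ s : ℝ, (vB - s) * g s = vB * g s - s * g s := fun s => by ring
      simp only [e]
      rw [integral_sub ((intg v vB hv1.le hvle hvB2.le).const_mul vB)
        (intf v vB hv1.le hvle hvB2.le), integral_const_mul]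
    have hGsplitB : G1 + (∫ t in v..vB, g t) = ∫ t in vmin..vB, g t :=
      integral_add_adjacent_intervals (intg vmin v le_rfl hv1.le hv2)
        (intg v vB hv1.le hvle hvB2.le)
    have hIsplitB : I1 + (∫ t in v..vB, t * g t) = ∫ t in vmin..vB, t * g t :=
      integral_add_adjacent_intervals (intf vmin v le_rfl hv1.le hv2)
        (intf v vB hv1.le hvle hvB2.le)
    have hRval : K v - v * D v = (1-p)*(vB - v) + p*((vB - v)*G1)
        + p*(vB * (∫ t in v..vB, g t) - ∫ t in v..vB, t * g t) := by
      have e0 : K v - v * D v = (K v - v * D v) - (K vB - vB * D vB) := by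
        rw [hKvB]; ring
      rw [e0, hK v, hK vB, hD v, hD vB, hG v, hG vB, ← hGsplitB, ← hIsplitB,
        ← hG1def, ← hI1def]
      ring
    have hR : 0 ≤ K v - v * D v := by
      rw [hRval]
      rw [hMidval] at hMid
      have h1 : 0 ≤ (vB - v) * G1 := mul_nonneg (by linarith) hG1pos.le
      nlinarith [mul_nonneg hp0.le hMid, mul_nonneg hp0.le h1]
    -- price pieces
    have hPleft : ∀ s ∈ Set.uIcc vmin v,
        P s v * g s = ((q*s + (1-q)*K v) / (q + (1-q)*D v)) * g s := by
      intro s hs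
      rw [Set.uIcc_of_le hv1.le] at hs
      rw [hP, if_neg (not_lt.2 hs.2)]
      norm_num
    have hPright : ∀ s ∈ Set.Ioc v vmax,
        P s v * g s = ((q*(1-p)*s + (1-q)*K v) / (q*(1-p) + (1-q)*D v)) * g s := by
      intro s hs
      rw [hP, if_pos hs.1]
      ring_nf
    set E1 := q + (1-q)*D v with hE1def
    set E2 := q*(1-p) + (1-q)*D v with hE2def
    have hDv_pos : 0 < D v := by
      rw [hD, hG, ← hG1def]
      linarith [mul_pos hp0 hG1pos]
    have hE1pos : 0 < E1 := by
      rw [hE1def]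
      linarith [mul_pos (show (0:ℝ) < 1-q by linarith) hDv_pos]
    have hE2pos : 0 < E2 := by
      rw [hE2def]
      linarith [mul_pos (show (0:ℝ) < 1-q by linarith) hDv_pos, mul_pos hq0 (show (0:ℝ) < 1-p by linarith)]
    have cL : Continuous (fun s : ℝ => (q*s + (1-q)*K v)/E1) :=
      ((continuous_const.mul continuous_id).add continuous_const).div_const E1
    have cR : Continuous (fun s : ℝ => (q*(1-p)*s + (1-q)*K v)/E2) :=
      ((continuous_const.mul continuous_id).add continuous_const).div_const E2
    have contL : IntervalIntegrable (fun s => ((q*s + (1-q)*K v)/E1) * g s)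
        MeasureTheory.volume vmin v :=
      (cL.continuousOn.mul (hg_cont.mono (hsub vmin v le_rfl hv1.le hv2))).intervalIntegrable
    have contR : IntervalIntegrable (fun s => ((q*(1-p)*s + (1-q)*K v)/E2) * g s)
        MeasureTheory.volume v vmax :=
      (cR.continuousOn.mul (hg_cont.mono (hsub v vmax hv1.le hvlt.le le_rfl))).intervalIntegrable
    have intPL : IntervalIntegrable (fun s => P s v * g s) MeasureTheory.volume vmin v := by
      refine contL.congr (fun s hs => ?_)
      rw [Set.uIoc_of_le hv1.le] at hs
      exact (hPleft s (by rw [Set.uIcc_of_le hv1.le]; exact Set.Ioc_subset_Icc_self hs)).symm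
    have intPR : IntervalIntegrable (fun s => P s v * g s) MeasureTheory.volume v vmax := by
      refine contR.congr (fun s hs => ?_)
      rw [Set.uIoc_of_le hvlt.le] at hs
      exact (hPright s hs).symm
    have hsplit : ∫ s in vmin..vmax, P s v * g s
        = (∫ s in vmin..v, P s v * g s) + ∫ s in v..vmax, P s v * g s :=
      (integral_add_adjacent_intervals intPL intPR).symm
    have hL : ∫ s in vmin..v, P s v * g s = (q*I1 + (1-q)*K v*G1) / E1 := by
      rw [integral_congr hPleft]
      have e : ∀ s : ℝ, ((q*s + (1-q)*K v)/E1) * g s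
          = E1⁻¹ * (q * (s * g s) + ((1-q)*K v) * g s) := fun s => by ring
      simp only [e]
      rw [integral_const_mul,
        integral_add ((intf vmin v le_rfl hv1.le hv2).const_mul q)
          ((intg vmin v le_rfl hv1.le hv2).const_mul ((1-q)*K v)),
        integral_const_mul, integral_const_mul, ← hG1def, ← hI1def, div_eq_inv_mul]
    have hRint : ∫ s in v..vmax, P s v * g s = (q*(1-p)*Ic + (1-q)*K v*Gc) / E2 := by
      rw [integral_congr_ae (MeasureTheory.ae_of_all _
        (fun s hs => hPright s (by rwa [Set.uIoc_of_le hvlt.le] at hs)))]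
      have e : ∀ s : ℝ, ((q*(1-p)*s + (1-q)*K v)/E2) * g s
          = E2⁻¹ * ((q*(1-p)) * (s * g s) + ((1-q)*K v) * g s) := fun s => by ring
      simp only [e]
      rw [integral_const_mul,
        integral_add ((intf v vmax hv1.le hvlt.le le_rfl).const_mul (q*(1-p)))
          ((intg v vmax hv1.le hvlt.le le_rfl).const_mul ((1-q)*K v)),
        integral_const_mul, integral_const_mul, ← hGcdef, ← hIcdef, div_eq_inv_mul]
    have hPvv : P v v = (q*v + (1-q)*K v)/E1 := by
      rw [hP]; norm_num; rw [hE1def]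
    rw [hsplit, hL, hRint, hPvv]
    exact key_alg p q v I1 G1 Ic Gc μ (K v) (D v) E1 E2 hp0 hp1 hq0 hq1
      hG1pos hGsum hGc0 hIsum (by rw [hK v, ← hI1def]) (by rw [hD v, hG v, ← hG1def])
      hE1def hE2def hB hR
  constructor
  · exact claim vB hvB1 hvB2.le le_rfl
  · intro vE hvE heq
    by_contra hcon
    push_neg at hcon
    have := claim vE hvE.1 hvE.2 hcon
    linarith [heq ▸ this]
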